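/- For any invertible matrix A over the Laurent polynomial ring k[t,t⁻¹] (k a field), there exist an invertible matrix S over k[t] and an invertible matrix T over k[t⁻¹] such that S·A·T is a diagonal matrix whose diagonal entries are powers t^{d_1},…,t^{d_r} for some integers d_1,…,d_r. -/

import Mathlib

open LaurentPolynomial

set_option maxHeartbeats 1000000
set_option synthInstance.maxHeartbeats 400000

section Helpers
variable {k : Type*} [Field k] {r : ℕ} {Rsub : Subalgebra k (LaurentPolynomial k)}

noncomputable instance instCoeFunLaurentCoeff : CoeFun (LaurentPolynomial k) (fun _ => ℤ → k) :=
  ⟨fun f => f.coeff⟩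

lemma coeff_one (n : ℤ) : (1 : LaurentPolynomial k) n = if n = 0 then 1 else 0 := by
  rw [show (1 : LaurentPolynomial k) = AddMonoidAlgebra.single 0 1 from rfl,
    AddMonoidAlgebra.coeff_single, Finsupp.single_apply]
  simp [eq_comm]

lemma coeff_add (f g : LaurentPolynomial k) (n : ℤ) :
    (f + g : LaurentPolynomial k) n = f n + g n := rfl

lemma coeff_sum {ι : Type*} (s : Finset ι) (f : ι → LaurentPolynomial k) (n : ℤ) :
    (∑ i ∈ s, f i : LaurentPolynomial k) n = ∑ i ∈ s, f i n := by
  classical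
  induction s using Finset.induction with
  | empty => rfl
  | insert _ _ h ih => rw [Finset.sum_insert h, Finset.sum_insert h, coeff_add, ih]

lemma coeff_T_mul (m : ℤ) (f : LaurentPolynomial k) (n : ℤ) :
    (T m * f : LaurentPolynomial k) n = f (n - m) := by
  rw [show (T m : LaurentPolynomial k) = AddMonoidAlgebra.single m 1 from rfl,
    AddMonoidAlgebra.coeff_single_mul_apply]
  simp [neg_add_eq_sub]

lemma coeff_C_mul (a : k) (f : LaurentPolynomial k) (n : ℤ) :
    (C a * f : LaurentPolynomial k) n = a * f n := by
  rw [← single_eq_C, AddMonoidAlgebra.coeff_single_mul_apply]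
  simp

lemma coeff_mul_zero {f g : LaurentPolynomial k} {a b : ℤ}
    (hf : ∀ n, a < n → f n = 0) (hg : ∀ n, b < n → g n = 0) :
    ∀ n, a + b < n → (f * g : LaurentPolynomial k) n = 0 := by
  intro n hn
  rw [AddMonoidAlgebra.mul_apply]
  simp only [Finsupp.sum]
  refine Finset.sum_eq_zero fun a₁ h₁ => Finset.sum_eq_zero fun a₂ h₂ => ?_
  split_ifs with h
  · by_cases ha : a < a₁
    · rw [hf _ ha, zero_mul]
    · have : b < a₂ := by omega
      rw [hg _ this, mul_zero]
  · rfl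

lemma coeff_mul_eq {f g : LaurentPolynomial k} {a b : ℤ}
    (hf : ∀ n, a < n → f n = 0) (hg : ∀ n, b < n → g n = 0) :
    (f * g : LaurentPolynomial k) (a + b) = f a * g b := by
  have hfs : ∀ a₁ ∈ f.coeff.support, a₁ ≤ a := fun a₁ h₁ => by
    by_contra h; exact (Finsupp.mem_support_iff.mp h₁) (hf _ (lt_of_not_ge h))
  have hgs : ∀ a₂ ∈ g.coeff.support, a₂ ≤ b := fun a₂ h₂ => by
    by_contra h; exact (Finsupp.mem_support_iff.mp h₂) (hg _ (lt_of_not_ge h))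
  rw [AddMonoidAlgebra.mul_apply]
  simp only [Finsupp.sum]
  rw [Finset.sum_eq_single a (fun a₁ h₁ hne => Finset.sum_eq_zero fun a₂ h₂ => by
        rw [if_neg]; have := hfs a₁ h₁; have := hgs a₂ h₂; omega)
      (fun ha => Finset.sum_eq_zero fun a₂ h₂ => by
        rw [Finsupp.notMem_support_iff.mp ha, zero_mul, ite_self])]
  rw [Finset.sum_eq_single b (fun a₂ h₂ hne => by
        rw [if_neg]; have := hgs a₂ h₂; omega)
      (fun hb => by rw [Finsupp.notMem_support_iff.mp hb, mul_zero, ite_self])]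
  rw [if_pos rfl]

lemma coeff_prod {ι : Type*} (s : Finset ι) (f : ι → LaurentPolynomial k) (e : ι → ℤ)
    (h : ∀ i ∈ s, ∀ n, e i < n → f i n = 0) :
    (∀ n, (∑ i ∈ s, e i) < n → (∏ i ∈ s, f i : LaurentPolynomial k) n = 0) ∧
      (∏ i ∈ s, f i : LaurentPolynomial k) (∑ i ∈ s, e i) = ∏ i ∈ s, f i (e i) := by
  classical
  induction s using Finset.induction with
  | empty =>
      simp only [Finset.prod_empty, Finset.sum_empty, coeff_one]
      exact ⟨fun n hn => by rw [if_neg (by omega)], by simp⟩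
  | @insert a s ha ih =>
      have ihz := ih (fun i hi => h i (Finset.mem_insert_of_mem hi))
      have hfa := h a (Finset.mem_insert_self a s)
      rw [Finset.prod_insert ha, Finset.sum_insert ha, Finset.prod_insert ha]
      exact ⟨coeff_mul_zero hfa ihz.1, by rw [coeff_mul_eq hfa ihz.1, ihz.2]⟩

lemma coeff_det {r : ℕ} (M : Matrix (Fin r) (Fin r) (LaurentPolynomial k)) (e : Fin r → ℤ)
    (h : ∀ i j n, e i < n → M i j n = 0) :
    (∀ n, (∑ i, e i) < n → M.det n = 0) ∧
      M.det (∑ i, e i) = Matrix.det (Matrix.of fun i j => M i j (e i)) := by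
  rw [Matrix.det_apply, Matrix.det_apply]
  have key : ∀ σ : Equiv.Perm (Fin r),
      (∀ n, (∑ i, e i) < n → (∏ i, M (σ i) i : LaurentPolynomial k) n = 0) ∧
        (∏ i, M (σ i) i : LaurentPolynomial k) (∑ i, e i) = ∏ i, M (σ i) i (e (σ i)) := by
    intro σ
    have := coeff_prod Finset.univ (fun i => M (σ i) i) (fun i => e (σ i))
      (fun i _ n hn => h (σ i) i n hn)
    rwa [Equiv.sum_comp σ e] at this
  constructor
  · intro n hn
    rw [coeff_sum]
    refine Finset.sum_eq_zero fun σ _ => ?_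
    rw [Units.smul_def, AddMonoidAlgebra.coeff_smul_apply, (key σ).1 n hn, smul_zero]
  · rw [coeff_sum]
    refine Finset.sum_congr rfl fun σ _ => ?_
    rw [Units.smul_def, AddMonoidAlgebra.coeff_smul_apply, (key σ).2]
    rfl

lemma T_mem_pos {n : ℤ} (hn : 0 ≤ n) :
    (T n : LaurentPolynomial k) ∈ Algebra.adjoin k {(T 1 : LaurentPolynomial k)} := by
  have h : ((T 1 : LaurentPolynomial k)) ^ n.toNat = T n := by
    rw [T_pow]; congr 1; omega
  exact h ▸ pow_mem (Algebra.subset_adjoin (Set.mem_singleton _)) _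

lemma T_mem_neg {n : ℤ} (hn : n ≤ 0) :
    (T n : LaurentPolynomial k) ∈ Algebra.adjoin k {(T (-1) : LaurentPolynomial k)} := by
  have h : ((T (-1) : LaurentPolynomial k)) ^ (-n).toNat = T n := by
    rw [T_pow]; congr 1; omega
  exact h ▸ pow_mem (Algebra.subset_adjoin (Set.mem_singleton _)) _

lemma mem_adjoin_pos {f : LaurentPolynomial k} (h : ∀ n : ℤ, n < 0 → f n = 0) :
    f ∈ Algebra.adjoin k {(T 1 : LaurentPolynomial k)} := by
  rw [← AddMonoidAlgebra.sum_coeff_single f, Finsupp.sum]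
  refine sum_mem fun n hn => ?_
  rw [single_eq_C_mul_T, C_eq_algebraMap]
  exact mul_mem (Subalgebra.algebraMap_mem _ _)
    (T_mem_pos (by by_contra hc; exact (Finsupp.mem_support_iff.mp hn) (h n (by omega))))

lemma mem_adjoin_neg {f : LaurentPolynomial k} (h : ∀ n : ℤ, 0 < n → f n = 0) :
    f ∈ Algebra.adjoin k {(T (-1) : LaurentPolynomial k)} := by
  rw [← AddMonoidAlgebra.sum_coeff_single f, Finsupp.sum]
  refine sum_mem fun n hn => ?_
  rw [single_eq_C_mul_T, C_eq_algebraMap]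
  exact mul_mem (Subalgebra.algebraMap_mem _ _)
    (T_mem_neg (by by_contra hc; exact (Finsupp.mem_support_iff.mp hn) (h n (by omega))))

lemma laurent_unit_eq {f : LaurentPolynomial k} (h : IsUnit f) :
    ∃ (a : k) (n : ℤ), a ≠ 0 ∧ f = C a * T n := by
  obtain ⟨u, rfl⟩ := h
  obtain ⟨n, p, hp⟩ := exists_T_pow (u : LaurentPolynomial k)
  obtain ⟨m, q, hq⟩ := exists_T_pow ((u⁻¹ : (LaurentPolynomial k)ˣ) : LaurentPolynomial k)
  have h1 : (u : LaurentPolynomial k) * ((u⁻¹ : (LaurentPolynomial k)ˣ) : LaurentPolynomial k)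
      = 1 := u.mul_inv
  have hpq : Polynomial.toLaurent (p * q) = Polynomial.toLaurent (Polynomial.X ^ (n + m)) := by
    rw [map_mul, hp, hq, Polynomial.toLaurent_X_pow, Nat.cast_add, T_add]
    linear_combination (T (n : ℤ) * T (m : ℤ)) * h1
  have hpq' : p * q = Polynomial.X ^ (n + m) := Polynomial.toLaurent_injective hpq
  have hdvd : p ∣ Polynomial.X ^ (n + m) := ⟨q, hpq'.symm⟩
  obtain ⟨i, hi, w, hw⟩ := (dvd_prime_pow Polynomial.prime_X _).mp hdvd
  obtain ⟨c, hc, hcw⟩ := Polynomial.isUnit_iff.mp (w⁻¹ : (Polynomial k)ˣ).isUnit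
  have hp2 : p = Polynomial.X ^ i * Polynomial.C c := by
    rw [hcw, ← hw, mul_assoc, Units.mul_inv, mul_one]
  refine ⟨c, (i : ℤ) - n, hc.ne_zero, ?_⟩
  have hu : (u : LaurentPolynomial k) = Polynomial.toLaurent p * T (-(n : ℤ)) := by
    rw [hp, mul_T_assoc, add_neg_cancel, T_zero, mul_one]
  rw [hu, hp2, map_mul, Polynomial.toLaurent_X_pow, Polynomial.toLaurent_C,
    mul_comm (T (i : ℤ)) (C c), mul_assoc, ← T_add]
  congr 1

noncomputable def rowBound (M : Matrix (Fin r) (Fin r) (LaurentPolynomial k)) (i : Fin r) : ℤ :=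
  WithBot.unbotD 0 ((Finset.univ.biUnion fun j => (M i j).coeff.support).max)

lemma rowBound_spec (M : Matrix (Fin r) (Fin r) (LaurentPolynomial k)) (i : Fin r) :
    ∀ j n, rowBound M i < n → M i j n = 0 := by
  intro j n hn
  by_contra hne
  have hmem : n ∈ Finset.univ.biUnion fun j => (M i j).coeff.support :=
    Finset.mem_biUnion.mpr ⟨j, Finset.mem_univ j, Finsupp.mem_support_iff.mpr hne⟩
  obtain ⟨m, hm⟩ := Finset.max_of_mem hmem
  have h1 : n ≤ m := by
    have := Finset.le_max hmem
    rw [hm] at this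
    exact_mod_cast this
  rw [rowBound, hm] at hn
  simp only [WithBot.unbotD_coe] at hn
  omega

lemma rowBound_le {M : Matrix (Fin r) (Fin r) (LaurentPolynomial k)} {i : Fin r} {b : ℤ}
    (hrow : ∃ j, M i j ≠ 0) (h : ∀ j n, b < n → M i j n = 0) : rowBound M i ≤ b := by
  obtain ⟨j0, hj0⟩ := hrow
  obtain ⟨n0, hn0⟩ := Finsupp.support_nonempty_iff.mpr (mt AddMonoidAlgebra.coeff_eq_zero.mp hj0)
  have hne : (Finset.univ.biUnion fun j => (M i j).coeff.support).Nonempty :=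
    ⟨n0, Finset.mem_biUnion.mpr ⟨j0, Finset.mem_univ _, hn0⟩⟩
  obtain ⟨m, hm⟩ := Finset.max_of_nonempty hne
  have hmem := Finset.mem_of_max hm
  obtain ⟨j, -, hj⟩ := Finset.mem_biUnion.mp hmem
  have hne' : M i j m ≠ 0 := Finsupp.mem_support_iff.mp hj
  have hmb : m ≤ b := by
    by_contra hc
    exact hne' (h j m (by omega))
  rw [rowBound, hm]
  simpa using hmb

noncomputable def phi (Rsub : Subalgebra k (LaurentPolynomial k)) :
    Matrix (Fin r) (Fin r) Rsub →+* Matrix (Fin r) (Fin r) (LaurentPolynomial k) :=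
  (Subalgebra.val Rsub).toRingHom.mapMatrix

lemma phi_apply (M : Matrix (Fin r) (Fin r) Rsub) :
    phi Rsub M = M.map (fun a => (a : LaurentPolynomial k)) := rfl

lemma phi_inj : Function.Injective (phi (k := k) (r := r) Rsub) := by
  intro A B h
  apply Matrix.ext
  intro i j
  have h2 : (phi Rsub A) i j = (phi Rsub B) i j := by rw [h]
  exact Subtype.ext h2

def matRes (M : Matrix (Fin r) (Fin r) (LaurentPolynomial k)) (h : ∀ i j, M i j ∈ Rsub) :
    Matrix (Fin r) (Fin r) Rsub := Matrix.of fun i j => ⟨M i j, h i j⟩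

lemma matRes_map (M : Matrix (Fin r) (Fin r) (LaurentPolynomial k)) (h : ∀ i j, M i j ∈ Rsub) :
    phi Rsub (matRes M h) = M := rfl

/-- a unit from an explicit two-sided inverse -/
noncomputable def unitRes (M N : Matrix (Fin r) (Fin r) (LaurentPolynomial k))
    (hM : ∀ i j, M i j ∈ Rsub) (hN : ∀ i j, N i j ∈ Rsub)
    (h1 : M * N = 1) (h2 : N * M = 1) : (Matrix (Fin r) (Fin r) Rsub)ˣ where
  val := matRes M hM
  inv := matRes N hN
  val_inv := phi_inj (by rw [map_mul, matRes_map, matRes_map, h1, map_one])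
  inv_val := phi_inj (by rw [map_mul, matRes_map, matRes_map, h2, map_one])

lemma unitRes_map (M N : Matrix (Fin r) (Fin r) (LaurentPolynomial k))
    (hM : ∀ i j, M i j ∈ Rsub) (hN : ∀ i j, N i j ∈ Rsub)
    (h1 : M * N = 1) (h2 : N * M = 1) :
    ((unitRes M N hM hN h1 h2).val).map (fun a => (a : LaurentPolynomial k)) = M := rfl

/-- a unit from entries in the subalgebra and constant nonzero determinant -/
lemma exists_unit_of_det_C {M : Matrix (Fin r) (Fin r) (LaurentPolynomial k)}
    (hM : ∀ i j, M i j ∈ Rsub) {a : k} (ha : a ≠ 0) (hdet : M.det = C a) :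
    ∃ u : (Matrix (Fin r) (Fin r) Rsub)ˣ,
      (u.val).map (fun x => (x : LaurentPolynomial k)) = M := by
  have hval : (Subalgebra.val Rsub) (matRes M hM).det = M.det := by
    rw [AlgHom.map_det]
    rfl
  have hdet' : (matRes M hM).det = ⟨C a, C_eq_algebraMap a ▸ Subalgebra.algebraMap_mem _ a⟩ := by
    apply Subtype.ext
    rw [show ((⟨C a, C_eq_algebraMap a ▸ Subalgebra.algebraMap_mem _ a⟩ : Rsub) :
      LaurentPolynomial k) = C a from rfl]
    rw [← hdet]
    exact hval
  have hunit : IsUnit (matRes M hM).det := by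
    rw [hdet']
    refine IsUnit.of_mul_eq_one ⟨C a⁻¹, C_eq_algebraMap a⁻¹ ▸ Subalgebra.algebraMap_mem _ _⟩
      (Subtype.ext ?_)
    show (C a * C a⁻¹ : LaurentPolynomial k) = 1
    rw [← map_mul, mul_inv_cancel₀ ha, map_one]
  obtain ⟨u, hu⟩ := (Matrix.isUnit_iff_isUnit_det _).mpr hunit
  exact ⟨u, by rw [hu]; rfl⟩
end Helpers


section KeyHelpers
variable {k : Type*} [Field k] {r : ℕ} {Rsub : Subalgebra k (LaurentPolynomial k)}

lemma coeff_zero' (n : ℤ) : (0 : LaurentPolynomial k) n = 0 := rfl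

lemma T_prod {ι : Type*} (s : Finset ι) (e : ι → ℤ) :
    (∏ i ∈ s, T (e i) : LaurentPolynomial k) = T (∑ i ∈ s, e i) := by
  classical
  induction s using Finset.induction with
  | empty => simp
  | insert _ _ h ih => rw [Finset.prod_insert h, Finset.sum_insert h, ih, T_add]

lemma one_apply_mem (i j : Fin r) :
    (1 : Matrix (Fin r) (Fin r) (LaurentPolynomial k)) i j ∈ Rsub := by
  rw [Matrix.one_apply]
  split_ifs
  exacts [one_mem _, zero_mem _]

lemma rowBound_congr {M M' : Matrix (Fin r) (Fin r) (LaurentPolynomial k)} {i : Fin r}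
    (h : ∀ j, M i j = M' i j) : rowBound M i = rowBound M' i := by
  unfold rowBound
  have hs : (fun j => (M i j).coeff.support) = fun j => (M' i j).coeff.support :=
    funext fun j => by rw [h j]
  rw [hs]

lemma map_coe_mul (A B : Matrix (Fin r) (Fin r) Rsub) :
    ((A * B : Matrix (Fin r) (Fin r) Rsub)).map (fun a => (a : LaurentPolynomial k)) =
      A.map (fun a => (a : LaurentPolynomial k)) * B.map (fun a => (a : LaurentPolynomial k)) := by
  rw [← phi_apply, ← phi_apply, ← phi_apply, map_mul]

lemma map_coe_one :
    ((1 : Matrix (Fin r) (Fin r) Rsub)).map (fun a => (a : LaurentPolynomial k)) = 1 := by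
  rw [← phi_apply, map_one]

end KeyHelpers

lemma key (k : Type*) [Field k] (r : ℕ) :
    ∀ (K : ℕ) (M : Matrix (Fin r) (Fin r) (LaurentPolynomial k)),
      IsUnit M.det → ∀ n₀ : ℤ, M.det n₀ ≠ 0 → (∑ i, rowBound M i) ≤ n₀ + K →
      ∃ (P : (Matrix (Fin r) (Fin r) (Algebra.adjoin k {(T 1 : LaurentPolynomial k)}))ˣ)
        (d : Fin r → ℤ)
        (B : (Matrix (Fin r) (Fin r) (Algebra.adjoin k {(T (-1) : LaurentPolynomial k)}))ˣ),
        (P.val.map (fun a => (a : LaurentPolynomial k))) * M =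
          Matrix.diagonal (fun i => T (d i)) * (B.val.map (fun a => (a : LaurentPolynomial k))) := by
  classical
  intro K
  induction K using Nat.strong_induction_on with
  | _ K ih =>
  intro M hdet n₀ hn₀ hK
  set d : Fin r → ℤ := rowBound M with hd
  set c : Matrix (Fin r) (Fin r) k := Matrix.of (fun i j => M i j (d i)) with hc
  have hcd := coeff_det M d (fun i j n hn => rowBound_spec M i j n hn)
  have hds : ∀ i, rowBound M i = d i := fun i => rfl
  rw [← hc] at hcd
  by_cases hcdet : c.det = 0
  · -- the leading coefficient matrix is singular: perform a row reduction
    have hle : n₀ ≤ ∑ i, d i := by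
      by_contra h
      exact hn₀ (hcd.1 n₀ (by omega))
    have hne : n₀ ≠ ∑ i, d i := by
      intro h
      apply hn₀
      rw [h, hcd.2, hcdet]
    have hK1 : 1 ≤ K := by omega
    obtain ⟨v, hv0, hvc⟩ := Matrix.exists_vecMul_eq_zero_iff.mpr hcdet
    have hvnth : ∃ i, v i ≠ 0 := Function.ne_iff.mp hv0
    obtain ⟨i₀, hi₀mem, hi₀max⟩ := Finset.exists_max_image
      (Finset.univ.filter (fun i => v i ≠ 0)) d
      (by obtain ⟨i, hi⟩ := hvnth
          exact ⟨i, Finset.mem_filter.mpr ⟨Finset.mem_univ _, hi⟩⟩)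
    have hvi₀ : v i₀ ≠ 0 := (Finset.mem_filter.mp hi₀mem).2
    have hmax : ∀ l, v l ≠ 0 → d l ≤ d i₀ := fun l hl =>
      hi₀max l (Finset.mem_filter.mpr ⟨Finset.mem_univ _, hl⟩)
    -- the row operation
    set w : Fin r → LaurentPolynomial k :=
      fun j => if j = i₀ then 0 else C (v j / v i₀) * T (d i₀ - d j) with hw
    set N : Matrix (Fin r) (Fin r) (LaurentPolynomial k) :=
      Matrix.of (fun i j => if i = i₀ then w j else 0) with hN
    have hNapp : ∀ i j, N i j = if i = i₀ then w j else 0 := fun i j => rfl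
    have hwi₀ : w i₀ = 0 := if_pos rfl
    have hNN : N * N = 0 := by
      apply Matrix.ext
      intro i j
      rw [Matrix.mul_apply, Matrix.zero_apply]
      refine Finset.sum_eq_zero fun l _ => ?_
      rw [hNapp, hNapp]
      by_cases hl : l = i₀
      · by_cases hi : i = i₀
        · rw [if_pos hi, hl, hwi₀, zero_mul]
        · rw [if_neg hi, zero_mul]
      · rw [if_neg hl, mul_zero]
    have h1 : (1 + N) * (1 - N) = 1 := by
      rw [mul_sub, mul_one, add_mul, one_mul, hNN, add_zero, add_sub_cancel_right]
    have h2 : (1 - N) * (1 + N) = 1 := by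
      rw [sub_mul, one_mul, mul_add, mul_one, hNN, add_zero, add_sub_cancel_right]
    have hwmem : ∀ j, w j ∈ Algebra.adjoin k {(T 1 : LaurentPolynomial k)} := by
      intro j
      simp only [hw]
      by_cases hj : j = i₀
      · rw [if_pos hj]; exact zero_mem _
      · rw [if_neg hj]
        by_cases hvj : v j = 0
        · rw [hvj, zero_div, map_zero, zero_mul]; exact zero_mem _
        · refine mul_mem ?_ (T_mem_pos (by have := hmax j hvj; omega))
          rw [C_eq_algebraMap]
          exact Subalgebra.algebraMap_mem _ _
    have hNmem : ∀ i j, N i j ∈ Algebra.adjoin k {(T 1 : LaurentPolynomial k)} := by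
      intro i j
      rw [hNapp]
      split_ifs
      · exact hwmem j
      · exact zero_mem _
    have hEmem : ∀ i j, (1 + N) i j ∈ Algebra.adjoin k {(T 1 : LaurentPolynomial k)} :=
      fun i j => by rw [Matrix.add_apply]; exact add_mem (one_apply_mem i j) (hNmem i j)
    have hE'mem : ∀ i j, (1 - N) i j ∈ Algebra.adjoin k {(T 1 : LaurentPolynomial k)} :=
      fun i j => by rw [Matrix.sub_apply]; exact sub_mem (one_apply_mem i j) (hNmem i j)
    set M₁ : Matrix (Fin r) (Fin r) (LaurentPolynomial k) := (1 + N) * M with hM₁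
    have hM₁app : ∀ i j, M₁ i j = M i j + if i = i₀ then ∑ l, w l * M l j else 0 := by
      intro i j
      rw [hM₁, add_mul, one_mul, Matrix.add_apply, Matrix.mul_apply]
      congr 1
      by_cases hi : i = i₀
      · rw [if_pos hi]
        exact Finset.sum_congr rfl fun l _ => by rw [hNapp, if_pos hi]
      · rw [if_neg hi]
        exact Finset.sum_eq_zero fun l _ => by rw [hNapp, if_neg hi, zero_mul]
    have hrowsame : ∀ i, i ≠ i₀ → ∀ j, M₁ i j = M i j := fun i hi j => by
      rw [hM₁app, if_neg hi, add_zero]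
    have hsum0 : ∀ j, ∑ l, v l * c l j = 0 := by
      intro j
      have h := congrFun hvc j
      simpa [Matrix.vecMul, dotProduct] using h
    have hterm : ∀ l j (n : ℤ), (w l * M l j : LaurentPolynomial k) n =
        if l = i₀ then 0 else (v l / v i₀) * M l j (n - (d i₀ - d l)) := by
      intro l j n
      by_cases hl : l = i₀
      · rw [if_pos hl, hl, hwi₀, zero_mul, coeff_zero']
      · rw [if_neg hl]
        simp only [hw, if_neg hl]
        rw [mul_assoc, coeff_C_mul, coeff_T_mul]
    have hrowcoeff : ∀ j n, d i₀ - 1 < n → M₁ i₀ j n = 0 := by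
      intro j n hn
      rw [hM₁app, if_pos rfl, coeff_add, coeff_sum]
      rcases eq_or_lt_of_le (show d i₀ ≤ n by omega) with heq | hlt
      · -- n = d i₀ : the leading coefficients cancel by the choice of v
        subst heq
        have hM0 : M i₀ j (d i₀) = c i₀ j := rfl
        have hsum1 : ∀ l, (w l * M l j : LaurentPolynomial k) (d i₀) =
            if l = i₀ then 0 else (v l / v i₀) * c l j := by
          intro l
          rw [hterm l j (d i₀)]
          by_cases hl : l = i₀
          · rw [if_pos hl, if_pos hl]
          · rw [if_neg hl, if_neg hl, show d i₀ - (d i₀ - d l) = d l by ring, hc]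
            rfl
        rw [Finset.sum_congr rfl fun l _ => hsum1 l]
        have hsplit : ∑ l, (if l = i₀ then (0 : k) else (v l / v i₀) * c l j) =
            (∑ l, (v l / v i₀) * c l j) - (v i₀ / v i₀) * c i₀ j := by
          have hpt : ∀ l, (if l = i₀ then (0 : k) else (v l / v i₀) * c l j) =
              (v l / v i₀) * c l j - (if l = i₀ then (v l / v i₀) * c l j else 0) := by
            intro l
            split_ifs with hl <;> simp
          rw [Finset.sum_congr rfl fun l _ => hpt l, Finset.sum_sub_distrib,
            Finset.sum_ite_eq' Finset.univ i₀ (fun l => (v l / v i₀) * c l j),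
            if_pos (Finset.mem_univ i₀)]
        rw [hsplit]
        have hz : ∑ l, (v l / v i₀) * c l j = 0 := by
          have : ∀ l, (v l / v i₀) * c l j = (v i₀)⁻¹ * (v l * c l j) := by
            intro l; rw [div_eq_mul_inv]; ring
          rw [Finset.sum_congr rfl fun l _ => this l, ← Finset.mul_sum, hsum0, mul_zero]
        rw [hz, div_self hvi₀, hM0]
        ring
      · -- n > d i₀ : all coefficients vanish
        rw [rowBound_spec M i₀ j n (by have := hds i₀; omega), zero_add]
        refine Finset.sum_eq_zero fun l _ => ?_
        rw [hterm l j n]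
        split_ifs with hl
        · rfl
        · rw [rowBound_spec M l j _ (by have := hds l; omega), mul_zero]
    -- determinant considerations
    set uvec : Fin r → LaurentPolynomial k := Pi.single i₀ 1 with huvec
    have hu : ∀ i, (if i = i₀ then (1 : LaurentPolynomial k) else 0) = uvec i := by
      intro i
      rw [huvec, Pi.single_apply]
    have hcolrow : N = Matrix.replicateCol Unit uvec * Matrix.replicateRow Unit w := by
      apply Matrix.ext
      intro i j
      rw [Matrix.mul_apply, hNapp]
      simp only [Matrix.replicateCol_apply, Matrix.replicateRow_apply, Finset.univ_unique, Finset.sum_const,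
        Finset.card_singleton, one_smul]
      rw [← hu i]
      split_ifs with hi
      · rw [one_mul]
      · rw [zero_mul]
    have hdetE : (1 + N).det = 1 := by
      rw [hcolrow, Matrix.det_one_add_replicateCol_mul_replicateRow]
      have : dotProduct w (Pi.single i₀ 1) = 0 := by
        rw [dotProduct_single, mul_one, hwi₀]
      rw [this, add_zero]
    have hdetM₁ : M₁.det = M.det := by
      rw [hM₁, Matrix.det_mul, hdetE, one_mul]
    have hrow₀ : ∃ j, M₁ i₀ j ≠ 0 := by
      by_contra h
      push_neg at h
      have h0 : M₁.det = 0 := Matrix.det_eq_zero_of_row_eq_zero i₀ h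
      rw [hdetM₁] at h0
      exact hdet.ne_zero h0
    have hb₀ : rowBound M₁ i₀ ≤ d i₀ - 1 := rowBound_le hrow₀ hrowcoeff
    have hsum₁ : (∑ i, rowBound M₁ i) ≤ n₀ + (K - 1 : ℕ) := by
      have e1 : ∑ i ∈ Finset.univ.erase i₀, rowBound M₁ i =
          ∑ i ∈ Finset.univ.erase i₀, d i :=
        Finset.sum_congr rfl fun i hi =>
          (rowBound_congr (hrowsame i (Finset.ne_of_mem_erase hi))).trans (hds i)
      have e2 : rowBound M₁ i₀ + ∑ i ∈ Finset.univ.erase i₀, rowBound M₁ i =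
          ∑ i, rowBound M₁ i := Finset.add_sum_erase _ _ (Finset.mem_univ i₀)
      have e3 : d i₀ + ∑ i ∈ Finset.univ.erase i₀, d i = ∑ i, d i :=
        Finset.add_sum_erase _ _ (Finset.mem_univ i₀)
      have hcast : ((K - 1 : ℕ) : ℤ) = (K : ℤ) - 1 := by omega
      omega
    obtain ⟨P₁, d', B, hPB⟩ := ih (K - 1) (by omega) M₁ (hdetM₁ ▸ hdet) n₀
      (by rw [hdetM₁]; exact hn₀) hsum₁
    refine ⟨P₁ * unitRes (1 + N) (1 - N) hEmem hE'mem h1 h2, d', B, ?_⟩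
    rw [Units.val_mul, map_coe_mul, unitRes_map, Matrix.mul_assoc, ← hM₁]
    exact hPB
  · -- terminal case: the leading coefficient matrix is invertible
    obtain ⟨a, nn, ha, hM⟩ := laurent_unit_eq hdet
    have hMco : ∀ m : ℤ, M.det m = if nn = m then a else 0 := by
      intro m
      rw [hM, ← single_eq_C_mul_T]
      exact Finsupp.single_apply
    have hnn : nn = ∑ i, d i := by
      by_contra hne
      have h2 := hcd.2
      rw [hMco, if_neg hne] at h2
      exact hcdet h2.symm
    have hdetc : c.det = a := by
      rw [← hcd.2, hMco, if_pos hnn]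
    set B₀ : Matrix (Fin r) (Fin r) (LaurentPolynomial k) :=
      Matrix.diagonal (fun i => T (-(d i))) * M with hB₀
    have hB₀app : ∀ i j, B₀ i j = T (-(d i)) * M i j := fun i j => by
      rw [hB₀, Matrix.diagonal_mul]
    have hB₀coeff : ∀ i j (n : ℤ), B₀ i j n = M i j (n + d i) := by
      intro i j n
      rw [hB₀app, coeff_T_mul, show n - -(d i) = n + d i by ring]
    have hB₀mem : ∀ i j, B₀ i j ∈ Algebra.adjoin k {(T (-1) : LaurentPolynomial k)} := by
      intro i j
      refine mem_adjoin_neg fun n hn => ?_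
      rw [hB₀coeff]
      exact rowBound_spec M i j _ (by have := hds i; omega)
    have hB₀det : B₀.det = C a := by
      rw [hB₀, Matrix.det_mul, Matrix.det_diagonal, T_prod, hM, hnn]
      rw [mul_comm (C a) (T (∑ i, d i)), ← mul_assoc, ← T_add]
      rw [show (∑ i, -d i) + ∑ i, d i = 0 by rw [← Finset.sum_add_distrib]; simp, T_zero,
        one_mul]
    obtain ⟨B, hBmap⟩ := exists_unit_of_det_C hB₀mem ha hB₀det
    refine ⟨1, d, B, ?_⟩
    rw [Units.val_one, map_coe_one, one_mul, hBmap, hB₀, ← Matrix.mul_assoc,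
      Matrix.diagonal_mul_diagonal]
    have hone : (fun i => T (d i) * T (-(d i))) = fun _ => (1 : LaurentPolynomial k) :=
      funext fun i => by rw [← T_add, add_neg_cancel, T_zero]
    rw [hone, Matrix.diagonal_one, one_mul]

/-- `S` is an invertible matrix over the subalgebra `Rsub` of the Laurent polynomial
ring: it is the image of a unit of the matrix ring over `Rsub`. -/
def IsGLOver {k : Type*} [Field k] {r : ℕ} (Rsub : Subalgebra k (LaurentPolynomial k))
    (S : Matrix (Fin r) (Fin r) (LaurentPolynomial k)) : Prop :=
  ∃ S' : (Matrix (Fin r) (Fin r) Rsub)ˣ,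
    (S'.val).map (fun a => (a : LaurentPolynomial k)) = S

/-- For any invertible matrix `A` over the Laurent polynomial ring `k[t,t⁻¹]`
there are an invertible matrix `S` over `k[t]` and an invertible matrix `T'`
over `k[t⁻¹]` such that `S·A·T'` is the diagonal matrix `diag(t^{d₁},…,t^{d_r})`
for some integers `d₁,…,d_r`.  Here `k[t]` (resp. `k[t⁻¹]`) is the subalgebra of
`k[t,t⁻¹]` generated by `t = T 1` (resp. `t⁻¹ = T (-1)`). -/
theorem smith_normal_form_laurent (k : Type*) [Field k] (r : ℕ)
    (A : GL (Fin r) (LaurentPolynomial k)) :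
    ∃ (S T' : Matrix (Fin r) (Fin r) (LaurentPolynomial k)) (d : Fin r → ℤ),
      IsGLOver (Algebra.adjoin k {(T 1 : LaurentPolynomial k)}) S ∧
      IsGLOver (Algebra.adjoin k {(T (-1) : LaurentPolynomial k)}) T' ∧
      S * (A : Matrix (Fin r) (Fin r) (LaurentPolynomial k)) * T' =
        Matrix.diagonal (fun i => T (d i)) := by
  classical
  set M : Matrix (Fin r) (Fin r) (LaurentPolynomial k) :=
    (A : Matrix (Fin r) (Fin r) (LaurentPolynomial k)) with hMA
  have hdet : IsUnit M.det := (Matrix.isUnit_iff_isUnit_det _).mp ⟨A, rfl⟩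
  have hdne : M.det ≠ 0 := hdet.ne_zero
  obtain ⟨n₀, hn₀⟩ := Finsupp.support_nonempty_iff.mpr (mt AddMonoidAlgebra.coeff_eq_zero.mp hdne)
  have hn₀' : M.det n₀ ≠ 0 := Finsupp.mem_support_iff.mp hn₀
  obtain ⟨P, d, B, hPB⟩ := key k r (((∑ i, rowBound M i) - n₀).toNat) M hdet n₀ hn₀'
    (by have := Int.self_le_toNat ((∑ i, rowBound M i) - n₀); omega)
  refine ⟨P.val.map (fun a => (a : LaurentPolynomial k)),
    (B⁻¹).val.map (fun a => (a : LaurentPolynomial k)), d, ⟨P, rfl⟩, ⟨B⁻¹, rfl⟩, ?_⟩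
  rw [hPB, Matrix.mul_assoc, ← map_coe_mul, Units.mul_inv, map_coe_one, Matrix.mul_one]
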